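/- The middle-thirds Cantor set, viewed as a subset of ℂ̂ via the inclusions [0,1] ⊂ ℝ ⊂ ℂ ⊂ ℂ̂, is ambiently quasiconformally homogeneous. -/

import Mathlib

open scoped Topology

/-- The spherical-ratio linear dilatation of `f` at `x`, computed with respect to
distance functions `dX` and `dY`:
`H_f(x) = limsup_{r→0⁺} (sup {dY (f x) (f y) : dX x y = r}) / (inf {dY (f x) (f y) : dX x y = r})`. -/
noncomputable def linDil {X Y : Type*} (dX : X → X → ℝ) (dY : Y → Y → ℝ)
    (f : X → Y) (x : X) : ℝ :=
  Filter.limsup (fun r : ℝ =>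
      sSup ((fun y => dY (f x) (f y)) '' {y | dX x y = r}) /
      sInf ((fun y => dY (f x) (f y)) '' {y | dX x y = r}))
    (𝓝[>] (0 : ℝ))

/-- A homeomorphism `f` is `K`-quasiconformal (with respect to the distance functions
`dX`, `dY`) if `K ≥ 1` and the linear dilatation of `f` is at most `K` at every point. -/
def IsQCWith {X Y : Type*} [TopologicalSpace X] [TopologicalSpace Y]
    (dX : X → X → ℝ) (dY : Y → Y → ℝ) (K : ℝ) (f : X ≃ₜ Y) : Prop :=
  1 ≤ K ∧ ∀ x, linDil dX dY (⇑f) x ≤ K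

/-- The chordal distance on the one-point compactification of a normed group. -/
noncomputable def chordal {E : Type*} [NormedAddCommGroup E] : OnePoint E → OnePoint E → ℝ
  | Option.some x, Option.some y => 2 * ‖x - y‖ / Real.sqrt ((1 + ‖x‖ ^ 2) * (1 + ‖y‖ ^ 2))
  | Option.some x, Option.none => 2 / Real.sqrt (1 + ‖x‖ ^ 2)
  | Option.none, Option.some y => 2 / Real.sqrt (1 + ‖y‖ ^ 2)
  | Option.none, Option.none => 0

/-- `f` is a `K`-quasiconformal homeomorphism of the Riemann sphere `ℂ̂ = OnePoint ℂ`,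
with respect to the chordal distance. -/
def IsQCSphere (K : ℝ) (f : OnePoint ℂ ≃ₜ OnePoint ℂ) : Prop :=
  IsQCWith chordal chordal K f

/-- `R ⊆ ℂ̂` is ambiently quasiconformally homogeneous: there is `K ≥ 1` such that any
point of `R` can be mapped to any other point of `R` by a `K`-quasiconformal
homeomorphism of `ℂ̂` preserving `R`. -/
def AmbQCH (R : Set (OnePoint ℂ)) : Prop :=
  ∃ K : ℝ, ∀ x ∈ R, ∀ y ∈ R, ∃ f : OnePoint ℂ ≃ₜ OnePoint ℂ,
    IsQCSphere K f ∧ f '' R = R ∧ f x = y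

/-- The unit circle of `ℂ`, viewed inside the Riemann sphere. -/
def unitCircleSphere : Set (OnePoint ℂ) := (fun z : ℂ => (z : OnePoint ℂ)) '' Metric.sphere 0 1

/-- A quasicircle is the image of the unit circle under a quasiconformal
homeomorphism of the Riemann sphere. -/
def IsQuasicircle (J : Set (OnePoint ℂ)) : Prop :=
  ∃ (K : ℝ) (f : OnePoint ℂ ≃ₜ OnePoint ℂ), IsQCSphere K f ∧ J = f '' unitCircleSphere


open Complex Set

namespace CantorQC

/-! ### Preliminaries -/

lemma expdiff (s s' : ℝ) : ‖Complex.exp ((s:ℂ)*I) - Complex.exp ((s':ℂ)*I)‖ ≤ |s - s'| := by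
  have h1 : Complex.exp ((s:ℂ)*I) - Complex.exp ((s':ℂ)*I)
      = Complex.exp ((s':ℂ)*I) * (Complex.exp (((s-s' : ℝ):ℂ)*I) - 1) := by
    rw [mul_sub, ← Complex.exp_add, mul_one]
    push_cast
    ring_nf
  rw [h1, norm_mul, Complex.norm_exp_ofReal_mul_I, one_mul]
  set d := s - s' with hd
  have h3 : ‖Complex.exp ((d:ℂ)*I) - 1‖^2 = (Real.cos d - 1)^2 + (Real.sin d)^2 := by
    rw [Complex.exp_mul_I, Complex.sq_norm]
    simp [Complex.normSq_apply, Complex.cos_ofReal_re, Complex.sin_ofReal_re]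
    ring
  have h4 : (Real.cos d - 1)^2 + (Real.sin d)^2 = 2 - 2 * Real.cos d := by
    have := Real.sin_sq_add_cos_sq d
    nlinarith
  have h5 : 2 - 2 * Real.cos d = 4 * Real.sin (d/2)^2 := by
    have h := Real.sin_sq_eq_half_sub (d/2)
    have h' : Real.sin (d/2)^2 = 1/2 - Real.cos d / 2 := by
      rw [h]; ring_nf
    nlinarith
  have h6 : Real.sin (d/2)^2 ≤ (d/2)^2 := by
    have h := Real.abs_sin_le_abs (x := d/2)
    nlinarith [abs_nonneg (Real.sin (d/2)), abs_nonneg (d/2), _root_.sq_abs (Real.sin (d/2)),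
      _root_.sq_abs (d/2)]
  have h7 : ‖Complex.exp ((d:ℂ)*I) - 1‖^2 ≤ d^2 := by
    rw [h3, h4, h5]; nlinarith
  have h8 : ‖Complex.exp ((d:ℂ)*I) - 1‖ ≤ |d| := by
    have hn := norm_nonneg (Complex.exp ((d:ℂ)*I) - 1)
    nlinarith [abs_nonneg d, _root_.sq_abs d]
  exact h8

/-- the interpolation profile -/
noncomputable def mu (s : ℝ) : ℝ := max 0 (min 1 ((3/2 - s) * (20/13)))

lemma mu_nonneg (s : ℝ) : 0 ≤ mu s := le_max_left _ _

lemma mu_le_one (s : ℝ) : mu s ≤ 1 := by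
  rw [mu]
  rcases le_total 0 (min 1 ((3/2 - s) * (20/13))) with h | h
  · rw [max_eq_right h]; exact min_le_left _ _
  · rw [max_eq_left h]; norm_num

lemma mu_eq_one {s : ℝ} (h : s ≤ 17/20) : mu s = 1 := by
  have : (1:ℝ) ≤ (3/2 - s) * (20/13) := by nlinarith
  rw [mu, min_eq_left this, max_eq_right (by norm_num)]

lemma mu_eq_zero {s : ℝ} (h : 3/2 ≤ s) : mu s = 0 := by
  have : (3/2 - s) * (20/13) ≤ 0 := by nlinarith
  rw [mu, max_eq_left]
  exact le_trans (min_le_right _ _) this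

lemma mu_lip (s s' : ℝ) : |mu s - mu s'| ≤ (20/13) * |s - s'| := by
  have key : ∀ u v : ℝ, |max 0 u - max 0 v| ≤ |u - v| := by
    intro u v
    rw [max_comm 0 u, max_comm 0 v]
    exact abs_max_sub_max_le_abs u v 0
  have h1 : |mu s - mu s'| ≤ |min 1 ((3/2 - s) * (20/13)) - min 1 ((3/2 - s') * (20/13))| :=
    key _ _
  have h2 : |min 1 ((3/2 - s) * (20/13)) - min 1 ((3/2 - s') * (20/13))|
      ≤ |(3/2 - s) * (20/13) - (3/2 - s') * (20/13)| := by
    refine (abs_min_sub_min_le_max _ _ _ _).trans ?_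
    simp
  have h3 : |(3/2 - s) * (20/13) - (3/2 - s') * (20/13)| = (20/13) * |s - s'| := by
    rw [show (3/2 - s) * (20/13) - (3/2 - s') * (20/13) = (20/13) * (s' - s) by ring,
      abs_mul, abs_sub_comm]
    norm_num
  calc |mu s - mu s'| ≤ _ := h1
    _ ≤ _ := h2
    _ = _ := h3



/-! ### Cantor set structure -/

lemma preCantor_subset_unit (n : ℕ) : preCantorSet n ⊆ Set.Icc 0 1 := by
  induction n with
  | zero => exact le_refl _
  | succ n ih =>
    rintro x (⟨w, hw, rfl⟩ | ⟨w, hw, rfl⟩)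
    · obtain ⟨h0, h1⟩ := ih hw
      constructor <;> simp <;> linarith
    · obtain ⟨h0, h1⟩ := ih hw
      constructor <;> simp <;> linarith

lemma third_mem {x : ℝ} (h : x ∈ cantorSet) : x / 3 ∈ cantorSet := by
  rw [cantorSet, Set.mem_iInter] at h ⊢
  intro n
  cases n with
  | zero =>
    obtain ⟨h0, h1⟩ := preCantor_subset_unit 0 (h 0)
    exact ⟨by linarith, by linarith⟩
  | succ n => exact Or.inl ⟨x, h n, rfl⟩

lemma third_mem' {x : ℝ} (h : x ∈ cantorSet) : (2 + x) / 3 ∈ cantorSet := by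
  rw [cantorSet, Set.mem_iInter] at h ⊢
  intro n
  cases n with
  | zero =>
    obtain ⟨h0, h1⟩ := preCantor_subset_unit 0 (h 0)
    exact ⟨by linarith, by linarith⟩
  | succ n => exact Or.inr ⟨x, h n, rfl⟩

lemma cantor_mem_unit {x : ℝ} (h : x ∈ cantorSet) : 0 ≤ x ∧ x ≤ 1 :=
  cantorSet_subset_unitInterval h

lemma cantor_cases {x : ℝ} (h : x ∈ cantorSet) :
    (3 * x ∈ cantorSet ∧ x ≤ 1/3) ∨ (3 * x - 2 ∈ cantorSet ∧ 2/3 ≤ x) := by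
  have hmem : ∀ n, x ∈ preCantorSet n := Set.mem_iInter.mp h
  rcases le_or_gt x (1/2) with hx | hx
  · left
    have key : ∀ n, 3 * x ∈ preCantorSet n := by
      intro n
      rcases hmem (n+1) with ⟨w, hw, hwx⟩ | ⟨w, hw, hwx⟩
      · have : 3 * x = w := by field_simp at hwx; linarith
        rwa [this]
      · exfalso
        obtain ⟨h0, h1⟩ := preCantor_subset_unit n hw
        have : x = (2 + w)/3 := hwx.symm
        rw [this] at hx
        linarith
    have hle : x ≤ 1/3 := by
      have := (preCantor_subset_unit 0 (key 0)).2
      linarith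
    exact ⟨Set.mem_iInter.mpr key, hle⟩
  · right
    have key : ∀ n, 3 * x - 2 ∈ preCantorSet n := by
      intro n
      rcases hmem (n+1) with ⟨w, hw, hwx⟩ | ⟨w, hw, hwx⟩
      · exfalso
        obtain ⟨h0, h1⟩ := preCantor_subset_unit n hw
        have : x = w/3 := hwx.symm
        rw [this] at hx
        linarith
      · have : 3 * x - 2 = w := by field_simp at hwx; linarith
        rwa [this]
    have hge : 2/3 ≤ x := by
      have := (preCantor_subset_unit 0 (key 0)).1
      linarith
    exact ⟨Set.mem_iInter.mpr key, hge⟩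

lemma cantor_sym {x : ℝ} (h : x ∈ cantorSet) : 1 - x ∈ cantorSet := by
  have key : ∀ n, ∀ y, y ∈ preCantorSet n → 1 - y ∈ preCantorSet n := by
    intro n
    induction n with
    | zero => intro y hy; exact ⟨by simpa using hy.2, by simpa using hy.1⟩
    | succ n ih =>
      rintro y (⟨w, hw, rfl⟩ | ⟨w, hw, rfl⟩)
      · exact Or.inr ⟨1 - w, ih _ hw, by ring⟩
      · exact Or.inl ⟨1 - w, ih _ hw, by ring⟩
  exact Set.mem_iInter.mpr fun n => key n x (Set.mem_iInter.mp h n)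

lemma cantor_no_middle {x : ℝ} (h : x ∈ cantorSet) (h1 : 1/3 < x) (h2 : x < 2/3) : False := by
  rcases cantor_cases h with ⟨_, hle⟩ | ⟨_, hge⟩
  · linarith
  · linarith

/-! ### Ternary scales, blocks and digits -/

/-- `tt m = 3^{-m}` -/
noncomputable def tt (m : ℕ) : ℝ := (3:ℝ)⁻¹ ^ m

lemma tt_pos (m : ℕ) : 0 < tt m := pow_pos (by norm_num) m

lemma tt_zero : tt 0 = 1 := rfl

lemma tt_succ (m : ℕ) : tt (m+1) = tt m / 3 := by
  rw [tt, tt, pow_succ]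
  ring

lemma tt_anti {k K : ℕ} (h : k ≤ K) : tt K ≤ tt k :=
  pow_le_pow_of_le_one (by norm_num) (by norm_num) h

lemma tt_le_one (m : ℕ) : tt m ≤ 1 := tt_anti (Nat.zero_le m)

def bval (c : Bool) : ℝ := if c then 2 else 0

/-- base of the level-`m` block determined by the digits `a` -/
noncomputable def base (a : ℕ → Bool) (m : ℕ) : ℝ :=
  ∑ k ∈ Finset.range m, bval (a k) * tt (k+1)

/-- center of the level-`m` block -/
noncomputable def ctr (a : ℕ → Bool) (m : ℕ) : ℝ := base a m + tt m / 2

lemma base_zero (a : ℕ → Bool) : base a 0 = 0 := by simp [base]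

lemma ctr_zero (a : ℕ → Bool) : ctr a 0 = 1/2 := by simp [ctr, base_zero, tt_zero]

lemma base_succ (a : ℕ → Bool) (m : ℕ) :
    base a (m+1) = base a m + bval (a m) * tt (m+1) := by
  rw [base, base, Finset.sum_range_succ]

lemma ctr_succ_sub (a : ℕ → Bool) (m : ℕ) :
    ctr a (m+1) - ctr a m = (if a m then 1 else -1) * tt (m+1) := by
  rw [ctr, ctr, base_succ, tt_succ, bval]
  rcases a m with _ | _ <;> simp <;> ring

/-- `x` lies in all the blocks given by the digit sequence `a` -/
def InBlocks (a : ℕ → Bool) (x : ℝ) : Prop :=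
  ∀ m, x ∈ Set.Icc (base a m) (base a m + tt m)

lemma InBlocks.dist_ctr {a : ℕ → Bool} {x : ℝ} (h : InBlocks a x) (m : ℕ) :
    |x - ctr a m| ≤ tt m / 2 := by
  obtain ⟨h1, h2⟩ := h m
  rw [abs_le, ctr]
  constructor <;> linarith




/-! ### Block self-similarity -/

lemma scale_block (a : ℕ → Bool) (m : ℕ) (x : ℝ) :
    (x ∈ cantorSet ∧ x ∈ Set.Icc (base a m) (base a m + tt m)) ↔
      ∃ w ∈ cantorSet, x = base a m + tt m * w := by
  induction m with
  | zero =>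
    simp only [base_zero, tt_zero, zero_add, one_mul]
    constructor
    · rintro ⟨h, _⟩; exact ⟨x, h, rfl⟩
    · rintro ⟨w, hw, rfl⟩
      exact ⟨hw, cantor_mem_unit hw⟩
  | succ m ih =>
    have hts := tt_succ m
    have htp := tt_pos m
    have htp' := tt_pos (m+1)
    constructor
    · rintro ⟨hC, hI1, hI2⟩
      have hIm : x ∈ Set.Icc (base a m) (base a m + tt m) := by
        rw [base_succ] at hI1 hI2
        constructor
        · have : (0:ℝ) ≤ bval (a m) * tt (m+1) := by
            rcases a m with _|_ <;> simp [bval] <;> positivity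
          linarith
        · have : bval (a m) * tt (m+1) + tt (m+1) ≤ tt m := by
            rcases a m with _|_ <;> simp [bval] <;> linarith
          linarith
      obtain ⟨w, hwC, hwx⟩ := (ih.mp ⟨hC, hIm⟩)
      rcases ha : a m with _|_
      · -- digit 0 : w ∈ [0,1/3], new digit value 3w
        have hb : base a (m+1) = base a m := by rw [base_succ, ha]; simp [bval]
        have hw3 : w ≤ 1/3 := by
          rcases cantor_cases hwC with ⟨_, h3⟩ | ⟨_, h3⟩
          · exact h3
          · exfalso
            rw [base_succ, ha] at hI2
            simp [bval] at hI2
            rw [hwx] at hI2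
            nlinarith
        have h3w : 3 * w ∈ cantorSet := by
          rcases cantor_cases hwC with ⟨h3, _⟩ | ⟨_, h3⟩
          · exact h3
          · linarith
        exact ⟨3*w, h3w, by rw [hb, hwx, hts]; ring⟩
      · -- digit 1 : w ∈ [2/3,1]
        have hb : base a (m+1) = base a m + 2 * tt (m+1) := by
          rw [base_succ, ha]; simp [bval]
        have hw3 : 2/3 ≤ w := by
          rcases cantor_cases hwC with ⟨_, h3⟩ | ⟨_, h3⟩
          · exfalso
            rw [base_succ, ha] at hI1
            simp [bval] at hI1
            rw [hwx] at hI1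
            nlinarith
          · exact h3
        have h3w : 3 * w - 2 ∈ cantorSet := by
          rcases cantor_cases hwC with ⟨_, h3⟩ | ⟨h3, _⟩
          · linarith
          · exact h3
        exact ⟨3*w - 2, h3w, by rw [hb, hwx, hts]; ring⟩
    · rintro ⟨w, hwC, rfl⟩
      obtain ⟨hw0, hw1⟩ := cantor_mem_unit hwC
      have hIcc : base a (m+1) + tt (m+1) * w ∈
          Set.Icc (base a (m+1)) (base a (m+1) + tt (m+1)) := by
        constructor
        · nlinarith
        · nlinarith
      refine ⟨?_, hIcc⟩
      have : ∃ w' ∈ cantorSet, base a (m+1) + tt (m+1) * w = base a m + tt m * w' := by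
        rcases ha : a m with _|_
        · have hb : base a (m+1) = base a m := by rw [base_succ, ha]; simp [bval]
          exact ⟨w/3, third_mem hwC, by rw [hb, hts]; ring⟩
        · have hb : base a (m+1) = base a m + 2 * tt (m+1) := by
            rw [base_succ, ha]; simp [bval]
          exact ⟨(2+w)/3, third_mem' hwC, by rw [hb, hts]; ring⟩
      obtain ⟨w', hw'C, heq⟩ := this
      exact (ih.mpr ⟨w', hw'C, heq⟩).1

/-- points of the Cantor set within the "moat" of a block lie in the block -/
lemma gap_block (a : ℕ → Bool) (m : ℕ) (x : ℝ) (hC : x ∈ cantorSet)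
    (h : |x - ctr a m| < (3/2) * tt m) :
    x ∈ Set.Icc (base a m) (base a m + tt m) := by
  induction m with
  | zero =>
    obtain ⟨h0, h1⟩ := cantor_mem_unit hC
    simp only [base_zero, tt_zero, zero_add]
    exact ⟨h0, h1⟩
  | succ m ih =>
    have hts := tt_succ m
    have htp := tt_pos m
    have htp' := tt_pos (m+1)
    have hdc : |ctr a (m+1) - ctr a m| = tt (m+1) := by
      rw [ctr_succ_sub]
      rcases a m with _|_ <;> simp <;> linarith
    have hIm : x ∈ Set.Icc (base a m) (base a m + tt m) := by
      apply ih
      calc |x - ctr a m| ≤ |x - ctr a (m+1)| + |ctr a (m+1) - ctr a m| := by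
            have := abs_sub_le x (ctr a (m+1)) (ctr a m)
            linarith [abs_sub_le x (ctr a (m+1)) (ctr a m)]
        _ < (3/2) * tt (m+1) + tt (m+1) := by rw [hdc]; linarith
        _ ≤ (3/2) * tt m := by rw [hts]; linarith
    obtain ⟨w, hwC, rfl⟩ := (scale_block a m x).mp ⟨hC, hIm⟩
    obtain ⟨hw0, hw1⟩ := cantor_mem_unit hwC
    -- turn the hypothesis into a bound on w
    have hctr : ctr a (m+1) = base a m + bval (a m) * tt (m+1) + tt (m+1) / 2 := by
      rw [ctr, base_succ]
    have hkey : |tt m * w - bval (a m) * tt (m+1) - tt (m+1)/2| < (3/2) * tt (m+1) := by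
      have : base a m + tt m * w - ctr a (m+1)
          = tt m * w - bval (a m) * tt (m+1) - tt (m+1)/2 := by rw [hctr]; ring
      rwa [← this]
    rw [abs_lt] at hkey
    rcases ha : a m with _|_
    · -- digit 0: w < 2/3 hence w ≤ 1/3
      rw [ha] at hkey
      simp [bval] at hkey
      have hwlt : w < 2/3 := by nlinarith [hkey.2]
      have hw13 : w ≤ 1/3 := by
        by_contra hgt
        push_neg at hgt
        exact cantor_no_middle hwC hgt hwlt
      have hb : base a (m+1) = base a m := by rw [base_succ, ha]; simp [bval]
      rw [hb]
      constructor
      · nlinarith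
      · nlinarith
    · -- digit 1: w > 1/3 hence w ≥ 2/3
      rw [ha] at hkey
      simp [bval] at hkey
      have hwgt : 1/3 < w := by nlinarith [hkey.1]
      have hw23 : 2/3 ≤ w := by
        by_contra hlt
        push_neg at hlt
        exact cantor_no_middle hwC hwgt hlt
      have hb : base a (m+1) = base a m + 2 * tt (m+1) := by
        rw [base_succ, ha]; simp [bval]
      rw [hb]
      constructor
      · nlinarith
      · nlinarith

/-- every Cantor point has a digit sequence -/
lemma exists_digits {x : ℝ} (hx : x ∈ cantorSet) : ∃ a : ℕ → Bool, InBlocks a x := by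
  -- iterated expansion
  let T : ℝ → ℝ := fun z => if z ≤ 1/3 then 3*z else 3*z - 2
  let r : ℕ → ℝ := fun n => T^[n] x
  let a : ℕ → Bool := fun n => decide (2/3 ≤ r n)
  have hr0 : r 0 = x := rfl
  have hstep : ∀ n, r (n+1) = T (r n) := fun n => Function.iterate_succ_apply' T n x
  have key : ∀ n, r n ∈ cantorSet ∧ x = base a n + tt n * r n := by
    intro n
    induction n with
    | zero => exact ⟨by rwa [hr0], by rw [hr0, base_zero, tt_zero]; ring⟩
    | succ n ihn =>
      obtain ⟨hrC, hxe⟩ := ihn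
      rcases cantor_cases hrC with ⟨h3, hle⟩ | ⟨h3, hge⟩
      · have hr' : r (n+1) = 3 * r n := by
          rw [hstep n]
          simp only [T]
          rw [if_pos hle]
        have han : a n = false := by
          simp only [a, decide_eq_false_iff_not]
          intro hcon
          rcases eq_or_lt_of_le hle with he | hl
          · norm_num at hcon; linarith
          · linarith
        refine ⟨by rwa [hr'], ?_⟩
        rw [base_succ, han, hr', tt_succ]
        simp [bval]
        rw [hxe]
        ring
      · have hnle : ¬ (r n ≤ 1/3) := by
          intro hcon; linarith
        have hr' : r (n+1) = 3 * r n - 2 := by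
          rw [hstep n]
          simp only [T]
          rw [if_neg hnle]
        have han : a n = true := by simp only [a, decide_eq_true_eq]; exact hge
        refine ⟨by rwa [hr'], ?_⟩
        rw [base_succ, han, hr', tt_succ]
        simp [bval]
        rw [hxe]
        ring
  refine ⟨a, fun m => ?_⟩
  obtain ⟨hrC, hxe⟩ := key m
  obtain ⟨h0, h1⟩ := cantor_mem_unit hrC
  rw [hxe]
  have := tt_pos m
  constructor
  · nlinarith
  · nlinarith

/-- affine maps between two blocks of the same level preserve the Cantor set -/
lemma sigaff (a b : ℕ → Bool) (m : ℕ) (ε : ℝ) (hε : ε = 1 ∨ ε = -1) (x : ℝ)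
    (hC : x ∈ cantorSet) (hI : x ∈ Set.Icc (base a m) (base a m + tt m)) :
    ctr b m + ε * (x - ctr a m) ∈ cantorSet ∧
      ctr b m + ε * (x - ctr a m) ∈ Set.Icc (base b m) (base b m + tt m) := by
  obtain ⟨w, hwC, rfl⟩ := (scale_block a m x).mp ⟨hC, hI⟩
  rcases hε with rfl | rfl
  · have he : ctr b m + 1 * (base a m + tt m * w - ctr a m) = base b m + tt m * w := by
      rw [ctr, ctr]; ring
    rw [he]
    exact ⟨((scale_block b m _).mpr ⟨w, hwC, rfl⟩).1, ((scale_block b m _).mpr ⟨w, hwC, rfl⟩).2⟩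
  · have he : ctr b m + (-1) * (base a m + tt m * w - ctr a m) = base b m + tt m * (1 - w) := by
      rw [ctr, ctr]; ring
    rw [he]
    have h1w := cantor_sym hwC
    exact ⟨((scale_block b m _).mpr ⟨1-w, h1w, rfl⟩).1, ((scale_block b m _).mpr ⟨1-w, h1w, rfl⟩).2⟩

/-- telescoping bound for block centers -/
lemma ctr_telescope (a : ℕ → Bool) {k K : ℕ} (h : k ≤ K) :
    |ctr a K - ctr a k| ≤ (3/2) * tt (k+1) - (3/2) * tt (K+1) := by
  induction K, h using Nat.le_induction with
  | base => simp
  | succ K hkK ih =>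
    have hd : |ctr a (K+1) - ctr a K| = tt (K+1) := by
      rw [ctr_succ_sub]
      rcases a K with _|_ <;> simp <;> linarith [tt_pos (K+1)]
    have htt := tt_succ (K+1)
    have := tt_pos (K+1)
    calc |ctr a (K+1) - ctr a k| ≤ |ctr a (K+1) - ctr a K| + |ctr a K - ctr a k| :=
          abs_sub_le _ _ _
      _ ≤ tt (K+1) + ((3/2) * tt (k+1) - (3/2) * tt (K+1)) := by rw [hd]; linarith
      _ ≤ (3/2) * tt (k+1) - (3/2) * tt (K+1+1) := by rw [htt]; linarith


/-! ### The nested-twist map -/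

/-- block centers viewed in `ℂ` -/
noncomputable def UU (a : ℕ → Bool) (m : ℕ) : ℂ := ((ctr a m : ℝ) : ℂ)

/-- cumulative parity of the digit flips -/
def pb (a b : ℕ → Bool) : ℕ → Bool
  | 0 => false
  | m+1 => xor (a m) (b m)

/-- whether a flip happens at stage `m` -/
def dd (a b : ℕ → Bool) (m : ℕ) : Bool := xor (xor (a m) (b m)) (pb a b m)

/-- sign of the rigid part before stage `m` -/
noncomputable def sg (a b : ℕ → Bool) (m : ℕ) : ℝ := if pb a b m then -1 else 1

/-- flip indicator as a real number -/
noncomputable def DD (a b : ℕ → Bool) (m : ℕ) : ℝ := if dd a b m then 1 else 0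

/-- the rotation angle profile of the stage-`m` twist -/
noncomputable def ang (a b : ℕ → Bool) (ω : ℝ) (m : ℕ) (s : ℝ) : ℝ :=
  ω * Real.pi * DD a b m * mu (s / tt m)

/-- membership in the stage-`m` support disc -/
def inP (a : ℕ → Bool) (m : ℕ) (z : ℂ) : Prop := ‖z - UU a m‖ ≤ (3/2) * tt m

/-- index of the first support disc not containing `z` -/
noncomputable def NN (a : ℕ → Bool) (z : ℂ) : ℕ := sInf {m | ¬ inP a m z}

open scoped Classical in
/-- The nested-twist homeomorphism of `ℂ` sending `x` to `y` and mapping the Cantor set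
onto itself. -/
noncomputable def FF (a b : ℕ → Bool) (x y ω : ℝ) (z : ℂ) : ℂ :=
  if z = (x:ℂ) then (y:ℂ)
  else if NN a z = 0 then z
  else
    UU b (NN a z - 1) + (sg a b (NN a z - 1) : ℂ) *
      Complex.exp ((ang a b ω (NN a z - 1) ‖z - UU a (NN a z - 1)‖ : ℝ) * I) *
      (z - UU a (NN a z - 1))

/-! ### sign bookkeeping -/

lemma sg_cases (a b : ℕ → Bool) (m : ℕ) : sg a b m = 1 ∨ sg a b m = -1 := by
  rw [sg]; rcases pb a b m with _|_ <;> simp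

lemma sg_sq (a b : ℕ → Bool) (m : ℕ) : (sg a b m) * (sg a b m) = 1 := by
  rcases sg_cases a b m with h | h <;> rw [h] <;> norm_num

lemma sg_norm (a b : ℕ → Bool) (m : ℕ) : ‖(sg a b m : ℂ)‖ = 1 := by
  rcases sg_cases a b m with h | h <;> rw [h] <;> simp

lemma sg_symm (a b : ℕ → Bool) (m : ℕ) : sg b a m = sg a b m := by
  rw [sg, sg]
  congr 1
  cases m with
  | zero => rfl
  | succ m => simp [pb, Bool.xor_comm]

lemma pb_symm (a b : ℕ → Bool) (m : ℕ) : pb b a m = pb a b m := by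
  cases m with
  | zero => rfl
  | succ m => simp [pb, Bool.xor_comm]

lemma dd_symm (a b : ℕ → Bool) (m : ℕ) : dd b a m = dd a b m := by
  rw [dd, dd, pb_symm]
  cases a m <;> cases b m <;> simp

lemma DD_symm (a b : ℕ → Bool) (m : ℕ) : DD b a m = DD a b m := by
  rw [DD, DD, dd_symm]

lemma sg_succ (a b : ℕ → Bool) (m : ℕ) :
    sg a b (m+1) = sg a b m * (if dd a b m then -1 else 1) := by
  rw [sg, sg, dd]
  cases hP : pb a b m <;> cases hA : a m <;> cases hB : b m <;>
    simp [pb, hP, hA, hB]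

/-- the key compatibility of centers: `D1` -/
lemma D1r (a b : ℕ → Bool) (m : ℕ) :
    ctr b (m+1) - ctr b m = sg a b (m+1) * (ctr a (m+1) - ctr a m) := by
  rw [ctr_succ_sub, ctr_succ_sub, sg]
  have : pb a b (m+1) = xor (a m) (b m) := rfl
  rw [this]
  cases hA : a m <;> cases hB : b m <;> simp [hA, hB]

lemma UU_succ_sub (a b : ℕ → Bool) (m : ℕ) :
    UU b (m+1) - UU b m = (sg a b (m+1) : ℂ) * (UU a (m+1) - UU a m) := by
  rw [UU, UU, UU, UU, ← Complex.ofReal_sub, ← Complex.ofReal_sub, D1r a b m,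
    Complex.ofReal_mul]

lemma UU_zero_eq (a b : ℕ → Bool) : UU a 0 = UU b 0 := by
  rw [UU, UU, ctr_zero, ctr_zero]

lemma UU_succ_dist (a : ℕ → Bool) (m : ℕ) : ‖UU a (m+1) - UU a m‖ = tt (m+1) := by
  rw [UU, UU, ← Complex.ofReal_sub, Complex.norm_real, Real.norm_eq_abs, ctr_succ_sub]
  rcases a m with _|_ <;> simp <;> linarith [tt_pos (m+1)]

lemma UU_telescope (a : ℕ → Bool) {k K : ℕ} (h : k ≤ K) :
    ‖UU a K - UU a k‖ ≤ (3/2) * tt (k+1) - (3/2) * tt (K+1) := by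
  rw [UU, UU, ← Complex.ofReal_sub, Complex.norm_real, Real.norm_eq_abs]
  exact ctr_telescope a h

/-! ### angle profile lemmas -/

lemma ang_zero {a b : ℕ → Bool} {ω : ℝ} {m : ℕ} {s : ℝ} (h : (3/2) * tt m ≤ s) :
    ang a b ω m s = 0 := by
  rw [ang, mu_eq_zero, mul_zero]
  rw [le_div_iff₀ (tt_pos m)]
  linarith

lemma ang_lip (a b : ℕ → Bool) (ω : ℝ) (m : ℕ) (hω : ω = 1 ∨ ω = -1) (s s' : ℝ) :
    |ang a b ω m s - ang a b ω m s'| ≤ (Real.pi * (20/13) / tt m) * |s - s'| := by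
  have hωabs : |ω| = 1 := by rcases hω with rfl | rfl <;> simp
  have hDD : |DD a b m| ≤ 1 := by rw [DD]; rcases dd a b m with _|_ <;> simp
  have h1 : ang a b ω m s - ang a b ω m s' = ω * Real.pi * DD a b m * (mu (s / tt m) - mu (s' / tt m)) := by
    rw [ang, ang]; ring
  rw [h1, abs_mul, abs_mul, abs_mul, hωabs, _root_.abs_of_nonneg Real.pi_pos.le, one_mul]
  have h2 : |mu (s / tt m) - mu (s' / tt m)| ≤ (20/13) * |s - s'| / tt m := by
    refine (mu_lip _ _).trans ?_
    rw [div_sub_div_same, abs_div, _root_.abs_of_nonneg (tt_pos m).le, mul_div_assoc]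
  calc Real.pi * |DD a b m| * |mu (s / tt m) - mu (s' / tt m)|
      ≤ Real.pi * 1 * ((20/13) * |s - s'| / tt m) := by
        apply mul_le_mul
        · exact mul_le_mul_of_nonneg_left hDD Real.pi_pos.le
        · exact h2
        · exact abs_nonneg _
        · positivity
    _ = (Real.pi * (20/13) / tt m) * |s - s'| := by ring

lemma exp_ang_one {a b : ℕ → Bool} {ω : ℝ} {m : ℕ} {s : ℝ} (hω : ω = 1 ∨ ω = -1)
    (h : s ≤ (17/20) * tt m) :
    Complex.exp ((ang a b ω m s : ℝ) * I) = ((if dd a b m then (-1:ℝ) else 1 : ℝ) : ℂ) := by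
  have hmu : mu (s / tt m) = 1 := by
    apply mu_eq_one
    rw [div_le_iff₀ (tt_pos m)]
    linarith
  rw [ang, hmu, mul_one, DD]
  rcases hd : dd a b m with _|_
  · simp
  · simp only [if_true]
    have : ((ω * Real.pi * 1 : ℝ) : ℂ) * I = (ω:ℂ) * ((Real.pi : ℂ) * I) := by push_cast; ring
    rw [this]
    rcases hω with rfl | rfl
    · push_cast
      rw [one_mul, Complex.exp_pi_mul_I]
    · push_cast
      rw [show (-1 : ℂ) * ((Real.pi:ℂ) * I) = -((Real.pi:ℂ) * I) by ring]
      rw [Complex.exp_neg, Complex.exp_pi_mul_I]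
      norm_num

/-! ### generic twist estimates -/

section Twist

variable (c : ℂ) (θ : ℝ → ℝ)

/-- generic twist map -/
noncomputable def tw (z : ℂ) : ℂ := c + Complex.exp ((θ ‖z - c‖ : ℝ) * I) * (z - c)

lemma tw_norm (z : ℂ) : ‖tw c θ z - c‖ = ‖z - c‖ := by
  rw [tw, add_sub_cancel_left, norm_mul, Complex.norm_exp_ofReal_mul_I, one_mul]

lemma tw_lip {C R : ℝ} (hC : 0 ≤ C) (hR : 0 ≤ R)
    (hlip : ∀ s s', |θ s - θ s'| ≤ C * |s - s'|)
    (hzero : ∀ s, R ≤ s → θ s = 0) (hCR : C * R ≤ 8) (z w : ℂ) :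
    ‖tw c θ z - tw c θ w‖ ≤ 9 * ‖z - w‖ := by
  have main : ∀ z w : ℂ, ‖w - c‖ ≤ ‖z - c‖ → ‖tw c θ z - tw c θ w‖ ≤ 9 * ‖z - w‖ := by
    intro z w hord
    rcases le_or_gt R ‖w - c‖ with hwR | hwR
    · -- both angles vanish
      rw [tw, tw, hzero _ hwR, hzero _ (hwR.trans hord)]
      simp only [Complex.ofReal_zero, zero_mul, Complex.exp_zero, one_mul]
      have : c + (z - c) - (c + (w - c)) = z - w := by ring
      rw [this]
      have := norm_nonneg (z - w)
      linarith
    · have hsplit : tw c θ z - tw c θ w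
          = Complex.exp ((θ ‖z - c‖ : ℝ) * I) * (z - w)
            + (Complex.exp ((θ ‖z - c‖ : ℝ) * I) - Complex.exp ((θ ‖w - c‖ : ℝ) * I)) * (w - c) := by
        rw [tw, tw]; ring
      have h1 : ‖tw c θ z - tw c θ w‖
          ≤ ‖z - w‖ + |θ ‖z - c‖ - θ ‖w - c‖| * ‖w - c‖ := by
        rw [hsplit]
        refine (norm_add_le _ _).trans ?_
        rw [norm_mul, norm_mul, Complex.norm_exp_ofReal_mul_I, one_mul]
        have := expdiff (θ ‖z - c‖) (θ ‖w - c‖)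
        have hwc := norm_nonneg (w - c)
        nlinarith
      have h2 : |θ ‖z - c‖ - θ ‖w - c‖| ≤ C * ‖z - w‖ := by
        refine (hlip _ _).trans ?_
        have habs : |‖z - c‖ - ‖w - c‖| ≤ ‖z - w‖ := by
          have := abs_norm_sub_norm_le (z - c) (w - c)
          have he : z - c - (w - c) = z - w := by ring
          rwa [he] at this
        exact mul_le_mul_of_nonneg_left habs hC
      have h3 : |θ ‖z - c‖ - θ ‖w - c‖| * ‖w - c‖ ≤ C * ‖z - w‖ * R := by
        apply mul_le_mul h2 hwR.le (norm_nonneg _)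
        positivity
      have hzw := norm_nonneg (z - w)
      nlinarith
  rcases le_total ‖w - c‖ ‖z - c‖ with hord | hord
  · exact main z w hord
  · rw [norm_sub_rev, norm_sub_rev z w]
    exact main w z hord

lemma tw_inv (z : ℂ) : tw c (fun s => -θ s) (tw c θ z) = z := by
  rw [tw, tw, add_sub_cancel_left]
  rw [norm_mul, Complex.norm_exp_ofReal_mul_I, one_mul]
  rw [← mul_assoc, ← Complex.exp_add]
  have : ((-θ ‖z - c‖ : ℝ) : ℂ) * I + (θ ‖z - c‖ : ℝ) * I = 0 := by push_cast; ring
  rw [this, Complex.exp_zero, one_mul]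
  ring

lemma tw_colip {C R : ℝ} (hC : 0 ≤ C) (hR : 0 ≤ R)
    (hlip : ∀ s s', |θ s - θ s'| ≤ C * |s - s'|)
    (hzero : ∀ s, R ≤ s → θ s = 0) (hCR : C * R ≤ 8) (z w : ℂ) :
    ‖z - w‖ ≤ 9 * ‖tw c θ z - tw c θ w‖ := by
  have hlip' : ∀ s s', |(fun s => -θ s) s - (fun s => -θ s) s'| ≤ C * |s - s'| := by
    intro s s'
    simp only
    rw [show -θ s - -θ s' = -(θ s - θ s') by ring, abs_neg]
    exact hlip s s'
  have hzero' : ∀ s, R ≤ s → (fun s => -θ s) s = 0 := by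
    intro s hs; simp [hzero s hs]
  have := tw_lip c (fun s => -θ s) hC hR hlip' hzero' hCR (tw c θ z) (tw c θ w)
  rwa [tw_inv, tw_inv] at this

end Twist


/-! ### Region lemmas for `FF` -/

section MapLemmas

variable {a b : ℕ → Bool} {x y ω : ℝ} {z : ℂ}

lemma norm_x_sub_U (ha : InBlocks a x) (m : ℕ) : ‖(x:ℂ) - UU a m‖ ≤ tt m / 2 := by
  rw [UU, ← Complex.ofReal_sub, Complex.norm_real, Real.norm_eq_abs]
  exact ha.dist_ctr m

lemma x_inP (ha : InBlocks a x) (m : ℕ) : inP a m ((x:ℝ):ℂ) := by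
  have h := norm_x_sub_U ha m
  have := tt_pos m
  rw [inP]
  linarith

lemma exists_notP (ha : InBlocks a x) (hz : z ≠ (x:ℂ)) : ∃ m, ¬ inP a m z := by
  have hpos : 0 < ‖z - (x:ℂ)‖ := by rwa [norm_pos_iff, sub_ne_zero]
  obtain ⟨m, hm⟩ := exists_pow_lt_of_lt_one (show (0:ℝ) < ‖z - (x:ℂ)‖/2 by linarith)
    (show (3:ℝ)⁻¹ < 1 by norm_num)
  have hmtt : tt m < ‖z - (x:ℂ)‖/2 := hm
  refine ⟨m, fun hP => ?_⟩
  rw [inP] at hP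
  have h1 := norm_x_sub_U ha m
  have h2 : ‖z - (x:ℂ)‖ ≤ ‖z - UU a m‖ + ‖(x:ℂ) - UU a m‖ := by
    have := norm_add_le (z - UU a m) (UU a m - (x:ℂ))
    rw [show z - UU a m + (UU a m - (x:ℂ)) = z - (x:ℂ) by ring] at this
    rw [norm_sub_rev (x:ℂ) (UU a m)]
    linarith
  linarith

lemma notP_NN (ha : InBlocks a x) (hz : z ≠ (x:ℂ)) : ¬ inP a (NN a z) z :=
  Nat.sInf_mem (exists_notP ha hz)

lemma inP_of_lt {k : ℕ} (h : k < NN a z) : inP a k z := by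
  by_contra h'
  exact absurd (Nat.sInf_le h') (not_le.mpr h)

lemma NN_eq {n : ℕ} (hk : ∀ k < n, inP a k z) (hn : ¬ inP a n z) : NN a z = n := by
  refine le_antisymm (Nat.sInf_le hn) ?_
  by_contra hlt
  push_neg at hlt
  exact (Nat.sInf_mem (⟨n, hn⟩ : Set.Nonempty {m | ¬ inP a m z})) (hk _ hlt)

lemma FF_eq_x : FF a b x y ω ((x:ℝ):ℂ) = (y:ℂ) := by rw [FF, if_pos rfl]

lemma FF_eq_far (hz : z ≠ (x:ℂ)) (h0 : NN a z = 0) : FF a b x y ω z = z := by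
  rw [FF, if_neg hz, if_pos h0]

lemma FF_eq_reg (hz : z ≠ (x:ℂ)) {J : ℕ} (hJ : NN a z = J + 1) :
    FF a b x y ω z = UU b J + (sg a b J : ℂ) *
      Complex.exp ((ang a b ω J ‖z - UU a J‖ : ℝ) * I) * (z - UU a J) := by
  rw [FF, if_neg hz, if_neg (by omega), hJ]
  simp

lemma FF_dist_V (hz : z ≠ (x:ℂ)) {J : ℕ} (hJ : NN a z = J + 1) :
    ‖FF a b x y ω z - UU b J‖ = ‖z - UU a J‖ := by
  rw [FF_eq_reg hz hJ, add_sub_cancel_left, norm_mul, norm_mul, sg_norm,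
    Complex.norm_exp_ofReal_mul_I, one_mul, one_mul]

lemma FF_eq_rot (hω : ω = 1 ∨ ω = -1) (hz : z ≠ (x:ℂ)) {J : ℕ} (hJ : NN a z = J + 1)
    (hrot : ‖z - UU a J‖ ≤ (17/20) * tt J) :
    FF a b x y ω z = UU b J + (sg a b (J+1) : ℂ) * (z - UU a J) := by
  rw [FF_eq_reg hz hJ, exp_ang_one hω hrot, sg_succ]
  push_cast
  ring

lemma FF_eq_rot' (hω : ω = 1 ∨ ω = -1) (hz : z ≠ (x:ℂ)) {J : ℕ} (hJ : NN a z = J + 1)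
    (hrot : ‖z - UU a J‖ ≤ (17/20) * tt J) :
    FF a b x y ω z - UU b (J+1) = (sg a b (J+1) : ℂ) * (z - UU a (J+1)) := by
  rw [FF_eq_rot hω hz hJ hrot]
  have h := UU_succ_sub a b J
  have : UU b J + (sg a b (J+1) : ℂ) * (z - UU a J) - UU b (J+1)
      = (sg a b (J+1) : ℂ) * (z - UU a J) - (UU b (J+1) - UU b J) := by ring
  rw [this, h]
  ring

/-- the image stays outside the image support disc of the next stage -/
lemma FF_far_next (hω : ω = 1 ∨ ω = -1) (ha : InBlocks a x) (hz : z ≠ (x:ℂ)) {J : ℕ}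
    (hJ : NN a z = J + 1) :
    (3/2) * tt (J+1) < ‖FF a b x y ω z - UU b (J+1)‖ := by
  have hnot : ¬ inP a (J+1) z := by
    have := notP_NN ha hz
    rwa [hJ] at this
  rw [inP, not_le] at hnot
  rcases le_or_gt ‖z - UU a J‖ ((17/20) * tt J) with hrot | hrot
  · rw [FF_eq_rot' hω hz hJ hrot, norm_mul, sg_norm, one_mul]
    exact hnot
  · have h1 := FF_dist_V (a := a) (b := b) (x := x) (y := y) (ω := ω) hz hJ
    have h2 := UU_succ_dist b J
    have h3 : ‖FF a b x y ω z - UU b J‖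
        ≤ ‖FF a b x y ω z - UU b (J+1)‖ + ‖UU b (J+1) - UU b J‖ := by
      have := norm_add_le (FF a b x y ω z - UU b (J+1)) (UU b (J+1) - UU b J)
      rw [show FF a b x y ω z - UU b (J+1) + (UU b (J+1) - UU b J)
          = FF a b x y ω z - UU b J by ring] at this
      exact this
    have h4 : tt J = 3 * tt (J+1) := by rw [tt_succ]; ring
    rw [h2] at h3
    rw [h1] at h3
    nlinarith [tt_pos (J+1)]

lemma FF_near (hz : z ≠ (x:ℂ)) {J k : ℕ} (hJ : NN a z = J + 1) (hk : k < J) :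
    ‖FF a b x y ω z - UU b k‖ ≤ (5/2) * tt (k+1) := by
  have h1 := FF_dist_V (a := a) (b := b) (x := x) (y := y) (ω := ω) hz hJ
  have h2 : inP a J z := inP_of_lt (by omega)
  rw [inP] at h2
  have h3 := UU_telescope b (le_of_lt hk)
  have h4 : ‖FF a b x y ω z - UU b k‖
      ≤ ‖FF a b x y ω z - UU b J‖ + ‖UU b J - UU b k‖ := by
    have := norm_add_le (FF a b x y ω z - UU b J) (UU b J - UU b k)
    rw [show FF a b x y ω z - UU b J + (UU b J - UU b k) = FF a b x y ω z - UU b k by ring] at this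
    exact this
  have h5 : tt (J+1) ≤ tt (k+2) := tt_anti (by omega)
  have h6 : tt (J+1) = tt J / 3 := tt_succ J
  have h7 : tt (k+2) = tt (k+1) / 3 := tt_succ (k+1)
  rw [h1] at h4
  nlinarith

lemma src_near {k : ℕ} (h : k + 1 < NN a z) : ‖z - UU a k‖ ≤ (5/2) * tt (k+1) := by
  have h1 : inP a (k+1) z := inP_of_lt h
  rw [inP] at h1
  have h2 := UU_succ_dist a k
  have h3 : ‖z - UU a k‖ ≤ ‖z - UU a (k+1)‖ + ‖UU a (k+1) - UU a k‖ := by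
    have := norm_add_le (z - UU a (k+1)) (UU a (k+1) - UU a k)
    rw [show z - UU a (k+1) + (UU a (k+1) - UU a k) = z - UU a k by ring] at this
    exact this
  rw [h2] at h3
  linarith

end MapLemmas


/-! ### The bi-Lipschitz estimates -/

section BiLip

variable {a b : ℕ → Bool} {x y ω : ℝ} {z w : ℂ}

lemma tri1 (u v c : ℂ) : ‖u - v‖ ≤ ‖u - c‖ + ‖v - c‖ := by
  have h : u - v = (u - c) - (v - c) := by ring
  rw [h]
  exact norm_sub_le _ _

lemma tri2 (u v c : ℂ) : ‖u - c‖ - ‖v - c‖ ≤ ‖u - v‖ := by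
  have h := tri1 u c v
  have h2 : ‖v - c‖ = ‖c - v‖ := norm_sub_rev _ _
  linarith [tri1 u v c, h]

lemma level_CR (J : ℕ) : (Real.pi * (20/13) / tt J) * ((3/2) * tt J) ≤ 8 := by
  have hne := ne_of_gt (tt_pos J)
  have h : (Real.pi * (20/13) / tt J) * ((3/2) * tt J) = Real.pi * (30/13) := by
    field_simp
    ring
  rw [h]
  nlinarith [Real.pi_lt_d2, Real.pi_pos]

lemma tw_lip_level (hω : ω = 1 ∨ ω = -1) (J : ℕ) (z w : ℂ) :
    ‖tw (UU a J) (ang a b ω J) z - tw (UU a J) (ang a b ω J) w‖ ≤ 9 * ‖z - w‖ :=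
  tw_lip (UU a J) (ang a b ω J) (div_nonneg (by positivity) (tt_pos J).le)
    (mul_nonneg (by norm_num) (tt_pos J).le)
    (ang_lip a b ω J hω) (fun s hs => ang_zero hs) (level_CR J) z w

lemma tw_colip_level (hω : ω = 1 ∨ ω = -1) (J : ℕ) (z w : ℂ) :
    ‖z - w‖ ≤ 9 * ‖tw (UU a J) (ang a b ω J) z - tw (UU a J) (ang a b ω J) w‖ :=
  tw_colip (UU a J) (ang a b ω J) (div_nonneg (by positivity) (tt_pos J).le)
    (mul_nonneg (by norm_num) (tt_pos J).le)
    (ang_lip a b ω J hω) (fun s hs => ang_zero hs) (level_CR J) z w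

lemma FF_tw_eq (hz : z ≠ (x:ℂ)) {J : ℕ} (hJ : NN a z = J + 1) :
    FF a b x y ω z = UU b J + (sg a b J : ℂ) * (tw (UU a J) (ang a b ω J) z - UU a J) := by
  rw [FF_eq_reg hz hJ, tw, add_sub_cancel_left]
  ring

lemma tw_fix {J : ℕ} (h : (3/2) * tt J ≤ ‖z - UU a J‖) :
    tw (UU a J) (ang a b ω J) z = z := by
  rw [tw, ang_zero h, Complex.ofReal_zero, zero_mul, Complex.exp_zero, one_mul]
  ring

/-- two-sided comparison when the difference is controlled by a single twist -/
lemma twist_case (hω : ω = 1 ∨ ω = -1) (J : ℕ)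
    (h : FF a b x y ω z - FF a b x y ω w
      = (sg a b J : ℂ) * (tw (UU a J) (ang a b ω J) z - tw (UU a J) (ang a b ω J) w)) :
    ‖FF a b x y ω z - FF a b x y ω w‖ ≤ 140 * ‖z - w‖ ∧
      ‖z - w‖ ≤ 140 * ‖FF a b x y ω z - FF a b x y ω w‖ := by
  have hn : ‖FF a b x y ω z - FF a b x y ω w‖
      = ‖tw (UU a J) (ang a b ω J) z - tw (UU a J) (ang a b ω J) w‖ := by
    rw [h, norm_mul, sg_norm, one_mul]
  have h9a := tw_lip_level (a := a) (b := b) hω J z w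
  have h9b := tw_colip_level (a := a) (b := b) hω J z w
  rw [hn]
  constructor
  · nlinarith [norm_nonneg (z - w)]
  · nlinarith [norm_nonneg (tw (UU a J) (ang a b ω J) z - tw (UU a J) (ang a b ω J) w)]

/-- main two-sided comparison away from the special point -/
lemma key_pair (hω : ω = 1 ∨ ω = -1) (ha : InBlocks a x)
    (hz : z ≠ (x:ℂ)) (hw : w ≠ (x:ℂ)) (hord : NN a z ≤ NN a w) :
    ‖FF a b x y ω z - FF a b x y ω w‖ ≤ 140 * ‖z - w‖ ∧
      ‖z - w‖ ≤ 140 * ‖FF a b x y ω z - FF a b x y ω w‖ := by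
  rcases hNz : NN a z with _ | J
  · -- z is fixed (outside all supports)
    have hFz : FF a b x y ω z = z := FF_eq_far hz hNz
    have hz0 : ¬ inP a 0 z := by
      have h := notP_NN ha hz
      rwa [hNz] at h
    rw [inP, not_le, tt_zero] at hz0
    rcases hNw : NN a w with _ | K
    · have hFw : FF a b x y ω w = w := FF_eq_far hw hNw
      rw [hFz, hFw]
      constructor <;> nlinarith [norm_nonneg (z - w)]
    · rcases Nat.eq_zero_or_pos K with rfl | hKpos
      · -- twist at level 0 on both
        have hsg0 : sg a b 0 = 1 := by rw [sg]; simp [pb]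
        have htz : tw (UU a 0) (ang a b ω 0) z = z := by
          apply tw_fix
          rw [tt_zero]
          linarith
        apply twist_case hω 0
        rw [hFz, FF_tw_eq hw hNw, hsg0, ← UU_zero_eq a b]
        push_cast
        first
        | linear_combination htz
        | linear_combination -htz
      · -- w is deep inside, z far outside
        have hw0 : ‖w - UU a 0‖ ≤ 5/6 := by
          have h := src_near (a := a) (z := w) (k := 0) (by omega)
          have h1 : tt 1 = 1/3 := by rw [tt, pow_one]; norm_num
          rw [h1] at h
          linarith
        have hFw0 : ‖FF a b x y ω w - UU a 0‖ ≤ 5/6 := by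
          have h := FF_near (b := b) (x := x) (y := y) (ω := ω) hw hNw (k := 0) (by omega)
          have h1 : tt 1 = 1/3 := by rw [tt, pow_one]; norm_num
          rw [h1, UU_zero_eq b a] at h
          linarith
        rw [hFz]
        have l1 := tri2 z w (UU a 0)
        have l2 := tri1 z w (UU a 0)
        have l3 := tri2 z (FF a b x y ω w) (UU a 0)
        have l4 := tri1 z (FF a b x y ω w) (UU a 0)
        constructor <;> linarith
  · -- z at level J
    have hNz' : NN a z = J + 1 := hNz
    have hzJ1 : ¬ inP a (J+1) z := by
      have h := notP_NN ha hz
      rwa [hNz] at h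
    rw [inP, not_le] at hzJ1
    have hzJ : inP a J z := inP_of_lt (by omega)
    rw [inP] at hzJ
    rcases hNw : NN a w with _ | K
    · omega
    · have hNw' : NN a w = K + 1 := hNw
      have hJK : J ≤ K := by omega
      rcases eq_or_lt_of_le hJK with rfl | hJltK
      · -- same level
        apply twist_case hω J
        rw [FF_tw_eq hz hNz', FF_tw_eq hw hNw']
        ring
      · -- J < K
        rcases le_or_gt ‖z - UU a J‖ ((17/20) * tt J) with hrot | hrot
        · -- z in the rotation zone of stage J
          rcases eq_or_lt_of_le (show J + 1 ≤ K by omega) with rfl | hK2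
          · -- w exactly one level deeper : single twist at level J+1
            have htz : tw (UU a (J+1)) (ang a b ω (J+1)) z = z := tw_fix hzJ1.le
            apply twist_case hω (J+1)
            have hFz' := FF_eq_rot' (b := b) (y := y) hω hz hNz' hrot
            have hFw' := FF_tw_eq (b := b) (y := y) (ω := ω) hw hNw'
            rw [hFw']
            rw [show FF a b x y ω z = UU b (J+1) + (sg a b (J+1) : ℂ) * (z - UU a (J+1)) by
              linear_combination hFz']
            first
            | linear_combination ((sg a b (J+1) : ℝ) : ℂ) * htz
            | linear_combination (-((sg a b (J+1) : ℝ) : ℂ)) * htz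
          · -- w at least two levels deeper
            have ht1 : tt (J+1) = tt J / 3 := tt_succ J
            have ht2 : tt (J+2) = tt (J+1) / 3 := tt_succ (J+1)
            have http := tt_pos (J+1)
            -- source bounds
            have hzU1 : ‖z - UU a (J+1)‖ ≤ (17/20) * tt J + tt (J+1) := by
              have h := tri1 z (UU a (J+1)) (UU a J)
              have hd : ‖UU a (J+1) - UU a J‖ = tt (J+1) := UU_succ_dist a J
              rw [hd] at h
              linarith
            have hwU1 : ‖w - UU a (J+1)‖ ≤ (5/2) * tt (J+2) := by
              apply src_near
              omega
            have hFzV : ‖FF a b x y ω z - UU b (J+1)‖ = ‖z - UU a (J+1)‖ := by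
              rw [FF_eq_rot' hω hz hNz' hrot, norm_mul, sg_norm, one_mul]
            have hFwV : ‖FF a b x y ω w - UU b (J+1)‖ ≤ (5/2) * tt (J+2) :=
              FF_near hw hNw' (by omega)
            have l1 := tri2 z w (UU a (J+1))
            have l2 := tri1 z w (UU a (J+1))
            have l3 := tri2 (FF a b x y ω z) (FF a b x y ω w) (UU b (J+1))
            have l4 := tri1 (FF a b x y ω z) (FF a b x y ω w) (UU b (J+1))
            constructor <;> linarith
        · -- z in the annulus of stage J
          have ht1 : tt (J+1) = tt J / 3 := tt_succ J
          have http := tt_pos (J+1)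
          have hwUJ : ‖w - UU a J‖ ≤ (5/2) * tt (J+1) := by
            apply src_near
            omega
          have hFzV : ‖FF a b x y ω z - UU b J‖ = ‖z - UU a J‖ := FF_dist_V hz hNz'
          have hFwV : ‖FF a b x y ω w - UU b J‖ ≤ (5/2) * tt (J+1) :=
            FF_near hw hNw' (by omega)
          have l1 := tri2 z w (UU a J)
          have l2 := tri1 z w (UU a J)
          have l3 := tri2 (FF a b x y ω z) (FF a b x y ω w) (UU b J)
          have l4 := tri1 (FF a b x y ω z) (FF a b x y ω w) (UU b J)
          constructor <;> linarith

/-- two-sided comparison with the special point -/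
lemma key_x (hω : ω = 1 ∨ ω = -1) (ha : InBlocks a x) (hb : InBlocks b y)
    (hw : w ≠ (x:ℂ)) :
    ‖(y:ℂ) - FF a b x y ω w‖ ≤ 140 * ‖(x:ℂ) - w‖ ∧
      ‖(x:ℂ) - w‖ ≤ 140 * ‖(y:ℂ) - FF a b x y ω w‖ := by
  rcases hNw : NN a w with _ | K
  · have hFw : FF a b x y ω w = w := FF_eq_far hw hNw
    have hw0 : ¬ inP a 0 w := by
      have h := notP_NN ha hw
      rwa [hNw] at h
    rw [inP, not_le, tt_zero] at hw0
    have hx0 : ‖(x:ℂ) - UU a 0‖ ≤ 1/2 := by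
      have := norm_x_sub_U ha 0
      rw [tt_zero] at this
      linarith
    have hy0 : ‖(y:ℂ) - UU a 0‖ ≤ 1/2 := by
      have := norm_x_sub_U hb 0
      rw [tt_zero, UU_zero_eq b a] at this
      linarith
    rw [hFw]
    have l1 := tri2 w (x:ℂ) (UU a 0)
    have l2 := tri1 (x:ℂ) w (UU a 0)
    have l3 := tri2 w (y:ℂ) (UU a 0)
    have l4 := tri1 (y:ℂ) w (UU a 0)
    rw [norm_sub_rev w (x:ℂ)] at l1
    rw [norm_sub_rev w (y:ℂ)] at l3
    constructor <;> linarith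
  · have hNw' : NN a w = K + 1 := hNw
    have ht1 : tt (K+1) = tt K / 3 := tt_succ K
    have http := tt_pos (K+1)
    have hwK1 : ¬ inP a (K+1) w := by
      have h := notP_NN ha hw
      rwa [hNw] at h
    rw [inP, not_le] at hwK1
    have hwK : inP a K w := inP_of_lt (by omega)
    rw [inP] at hwK
    have hxK1 : ‖(x:ℂ) - UU a (K+1)‖ ≤ tt (K+1) / 2 := norm_x_sub_U ha (K+1)
    have hxK : ‖(x:ℂ) - UU a K‖ ≤ tt K / 2 := norm_x_sub_U ha K
    have hyK1 : ‖(y:ℂ) - UU b (K+1)‖ ≤ tt (K+1) / 2 := norm_x_sub_U hb (K+1)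
    have hyK : ‖(y:ℂ) - UU b K‖ ≤ tt K / 2 := norm_x_sub_U hb K
    have hFwV : ‖FF a b x y ω w - UU b K‖ = ‖w - UU a K‖ := FF_dist_V hw hNw'
    have hFwFar := FF_far_next (b := b) (y := y) hω ha hw hNw'
    have l1 := tri2 w (x:ℂ) (UU a (K+1))
    have l2 := tri1 (x:ℂ) w (UU a K)
    have l3 := tri2 (FF a b x y ω w) (y:ℂ) (UU b (K+1))
    have l4 := tri1 (y:ℂ) (FF a b x y ω w) (UU b K)
    rw [norm_sub_rev w (x:ℂ)] at l1
    rw [norm_sub_rev (FF a b x y ω w) (y:ℂ)] at l3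
    constructor <;> linarith

/-- global Lipschitz bound -/
lemma FF_lip (hω : ω = 1 ∨ ω = -1) (ha : InBlocks a x) (hb : InBlocks b y) (z w : ℂ) :
    ‖FF a b x y ω z - FF a b x y ω w‖ ≤ 140 * ‖z - w‖ := by
  by_cases hz : z = (x:ℂ)
  · by_cases hw : w = (x:ℂ)
    · rw [hz, hw]
      simp
    · rw [hz, FF_eq_x]
      exact (key_x hω ha hb hw).1
  · by_cases hw : w = (x:ℂ)
    · rw [hw, FF_eq_x, norm_sub_rev (FF a b x y ω z) ((y:ℝ):ℂ), norm_sub_rev z ((x:ℝ):ℂ)]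
      exact (key_x hω ha hb hz).1
    · rcases le_total (NN a z) (NN a w) with hord | hord
      · exact (key_pair hω ha hz hw hord).1
      · rw [norm_sub_rev (FF a b x y ω z) (FF a b x y ω w), norm_sub_rev z w]
        exact (key_pair hω ha hw hz hord).1

/-- global co-Lipschitz bound -/
lemma FF_colip (hω : ω = 1 ∨ ω = -1) (ha : InBlocks a x) (hb : InBlocks b y) (z w : ℂ) :
    ‖z - w‖ ≤ 140 * ‖FF a b x y ω z - FF a b x y ω w‖ := by
  by_cases hz : z = (x:ℂ)
  · by_cases hw : w = (x:ℂ)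
    · rw [hz, hw]
      simp
    · rw [hz, FF_eq_x]
      exact (key_x hω ha hb hw).2
  · by_cases hw : w = (x:ℂ)
    · rw [hw, FF_eq_x, norm_sub_rev z ((x:ℝ):ℂ), norm_sub_rev (FF a b x y ω z) ((y:ℝ):ℂ)]
      exact (key_x hω ha hb hz).2
    · rcases le_total (NN a z) (NN a w) with hord | hord
      · exact (key_pair hω ha hz hw hord).2
      · rw [norm_sub_rev z w, norm_sub_rev (FF a b x y ω z) (FF a b x y ω w)]
        exact (key_pair hω ha hw hz hord).2

end BiLip


/-! ### Inversion, Cantor preservation, support -/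

section Inverse

variable {a b : ℕ → Bool} {x y ω : ℝ} {z : ℂ}

lemma ang_neg (a b : ℕ → Bool) (ω : ℝ) (m : ℕ) (s : ℝ) :
    ang b a (-ω) m s = - ang a b ω m s := by
  rw [ang, ang, DD_symm]
  ring

lemma NN_image (hω : ω = 1 ∨ ω = -1) (ha : InBlocks a x) (hz : z ≠ (x:ℂ)) :
    NN b (FF a b x y ω z) = NN a z := by
  rcases hNz : NN a z with _ | J
  · have hFz : FF a b x y ω z = z := FF_eq_far hz hNz
    have hz0 : ¬ inP a 0 z := by
      have h := notP_NN ha hz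
      rwa [hNz] at h
    apply NN_eq (fun k hk => absurd hk (by omega))
    rw [hFz, inP, ← UU_zero_eq a b]
    rwa [inP] at hz0
  · have hNz' : NN a z = J + 1 := hNz
    apply NN_eq
    · intro k hk
      rcases eq_or_lt_of_le (show k ≤ J by omega) with rfl | hkJ
      · rw [inP, FF_dist_V hz hNz']
        have h := inP_of_lt (a := a) (z := z) (k := k) (by omega)
        rwa [inP] at h
      · rw [inP]
        have h := FF_near (b := b) (x := x) (y := y) (ω := ω) hz hNz' hkJ
        have ht : tt (k+1) = tt k / 3 := tt_succ k
        linarith [tt_pos k]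
    · rw [inP, not_le]
      exact FF_far_next (b := b) (y := y) hω ha hz hNz'

lemma FF_ne_y (hω : ω = 1 ∨ ω = -1) (ha : InBlocks a x) (hb : InBlocks b y)
    (hz : z ≠ (x:ℂ)) : FF a b x y ω z ≠ ((y:ℝ):ℂ) := by
  rcases hNz : NN a z with _ | J
  · have hFz : FF a b x y ω z = z := FF_eq_far hz hNz
    have hz0 : ¬ inP a 0 z := by
      have h := notP_NN ha hz
      rwa [hNz] at h
    rw [hFz]
    intro hcon
    apply hz0
    rw [hcon]
    have h := x_inP hb 0
    rwa [inP, ← UU_zero_eq a b] at h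
  · have hNz' : NN a z = J + 1 := hNz
    have h1 := FF_far_next (b := b) (y := y) hω ha hz hNz'
    intro hcon
    rw [hcon] at h1
    have h2 := norm_x_sub_U hb (J+1)
    have := tt_pos (J+1)
    linarith

lemma gcomp (hω : ω = 1 ∨ ω = -1) (ha : InBlocks a x) (hb : InBlocks b y) (z : ℂ) :
    FF b a y x (-ω) (FF a b x y ω z) = z := by
  by_cases hz : z = (x:ℂ)
  · rw [hz, FF_eq_x, FF_eq_x]
  · have hFne : FF a b x y ω z ≠ ((y:ℝ):ℂ) := FF_ne_y hω ha hb hz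
    have hNN : NN b (FF a b x y ω z) = NN a z := NN_image hω ha hz
    rcases hNz : NN a z with _ | J
    · have hFz : FF a b x y ω z = z := FF_eq_far hz hNz
      rw [hNz, hFz] at hNN
      rw [hFz] at hFne ⊢
      exact FF_eq_far hFne hNN
    · have hNz' : NN a z = J + 1 := hNz
      rw [hNz'] at hNN
      set θ : ℝ := ang a b ω J ‖z - UU a J‖ with hθ
      have h1 : FF a b x y ω z - UU b J
          = (sg a b J : ℂ) * Complex.exp ((θ:ℝ) * I) * (z - UU a J) := by
        rw [FF_eq_reg hz hNz']
        ring
      have h2 := FF_eq_reg (a := b) (b := a) (x := y) (y := x) (ω := -ω) hFne hNN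
      rw [FF_dist_V hz hNz', sg_symm, ang_neg a b ω J] at h2
      rw [h2, h1]
      have hsg : ((sg a b J : ℝ):ℂ) * ((sg a b J : ℝ):ℂ) = 1 := by
        rw [← Complex.ofReal_mul, sg_sq]
        norm_num
      have hexp : Complex.exp (((-θ : ℝ):ℂ) * I) * Complex.exp ((θ:ℝ) * I) = 1 := by
        rw [← Complex.exp_add, show (((-θ:ℝ)):ℂ)*I + ((θ:ℝ):ℂ)*I = 0 by push_cast; ring,
          Complex.exp_zero]
      calc UU a J + (sg a b J : ℂ) * Complex.exp (((-θ:ℝ):ℂ) * I) *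
            ((sg a b J : ℂ) * Complex.exp ((θ:ℝ) * I) * (z - UU a J))
          = UU a J + (((sg a b J:ℝ):ℂ) * ((sg a b J:ℝ):ℂ)) *
            (Complex.exp (((-θ:ℝ):ℂ) * I) * Complex.exp ((θ:ℝ) * I)) * (z - UU a J) := by
            ring
        _ = z := by rw [hsg, hexp]; ring

/-- `FF` maps the (complexified) Cantor set into itself -/
lemma FF_maps_cantor (hω : ω = 1 ∨ ω = -1) (ha : InBlocks a x) (hb : InBlocks b y)
    (hyC : y ∈ cantorSet) {r : ℝ} (hr : r ∈ cantorSet) :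
    ∃ r' ∈ cantorSet, FF a b x y ω ((r:ℝ):ℂ) = ((r':ℝ):ℂ) := by
  by_cases hz : ((r:ℝ):ℂ) = ((x:ℝ):ℂ)
  · exact ⟨y, hyC, by rw [hz, FF_eq_x]⟩
  · rcases hNz : NN a ((r:ℝ):ℂ) with _ | J
    · exact ⟨r, hr, FF_eq_far hz hNz⟩
    · have hNz' : NN a ((r:ℝ):ℂ) = J + 1 := hNz
      have hnorm : ‖((r:ℝ):ℂ) - UU a J‖ = |r - ctr a J| := by
        rw [UU, ← Complex.ofReal_sub, Complex.norm_real, Real.norm_eq_abs]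
      have hzJ : |r - ctr a J| ≤ (3/2) * tt J := by
        have h := inP_of_lt (a := a) (z := ((r:ℝ):ℂ)) (k := J) (by omega)
        rwa [inP, hnorm] at h
      rcases lt_or_eq_of_le hzJ with hlt | heq
      · -- interior: `r` lies in the level-`J` block
        have hblk := gap_block a J r hr hlt
        have habs : |r - ctr a J| ≤ tt J / 2 := by
          rw [abs_le, ctr]
          obtain ⟨hb1, hb2⟩ := hblk
          constructor <;> linarith
        have hrot : ‖((r:ℝ):ℂ) - UU a J‖ ≤ (17/20) * tt J := by
          rw [hnorm]
          linarith [tt_pos J]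
        refine ⟨ctr b J + sg a b (J+1) * (r - ctr a J),
          (sigaff a b J _ (sg_cases a b (J+1)) r hr hblk).1, ?_⟩
        rw [FF_eq_rot hω hz hNz' hrot, UU, UU]
        push_cast
        ring
      · -- boundary of the support disc: no twisting
        have hang : ang a b ω J ‖((r:ℝ):ℂ) - UU a J‖ = 0 := by
          apply ang_zero
          rw [hnorm, ← heq]
        have hFF : FF a b x y ω ((r:ℝ):ℂ) = UU b J + ((sg a b J : ℝ):ℂ) * (((r:ℝ):ℂ) - UU a J) := by
          rw [FF_eq_reg hz hNz', hang]
          simp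
        cases J with
        | zero =>
          have hsg0 : sg a b 0 = 1 := by rw [sg]; simp [pb]
          refine ⟨r, hr, ?_⟩
          rw [hFF, hsg0, ← UU_zero_eq a b]
          push_cast
          ring
        | succ J' =>
          have hblk' : r ∈ Set.Icc (base a J') (base a J' + tt J') := by
            apply gap_block a J' r hr
            have hd : |ctr a (J'+1) - ctr a J'| = tt (J'+1) := by
              rw [ctr_succ_sub]
              rcases a J' with _|_ <;> simp <;> linarith [tt_pos (J'+1)]
            have htri := abs_sub_le r (ctr a (J'+1)) (ctr a J')
            have ht : tt (J'+1) = tt J' / 3 := tt_succ J'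
            have := tt_pos (J'+1)
            linarith [heq, hd, htri]
          have hval : ctr b (J'+1) + sg a b (J'+1) * (r - ctr a (J'+1))
              = ctr b J' + sg a b (J'+1) * (r - ctr a J') := by
            have hD := D1r a b J'
            linarith [hD]
          refine ⟨ctr b J' + sg a b (J'+1) * (r - ctr a J'),
            (sigaff a b J' _ (sg_cases a b (J'+1)) r hr hblk').1, ?_⟩
          rw [hFF, UU, UU]
          push_cast
          rw [show ((ctr b (J'+1) : ℝ):ℂ) + ((sg a b (J'+1) : ℝ):ℂ) * (((r:ℝ):ℂ) - ((ctr a (J'+1) : ℝ):ℂ))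
              = (((ctr b (J'+1) + sg a b (J'+1) * (r - ctr a (J'+1)) : ℝ)):ℂ) by push_cast; ring]
          rw [hval]
          push_cast
          ring

/-- points with large norm are fixed -/
lemma FF_far_id (ha : InBlocks a x) (h : 2 < ‖z‖) : FF a b x y ω z = z := by
  have hx1 : |x| ≤ 1 := by
    obtain ⟨h1, h2⟩ := ha 0
    simp only [base_zero, tt_zero] at h1 h2
    rw [abs_le]
    exact ⟨by linarith, by linarith⟩
  have hzx : z ≠ (x:ℂ) := by
    intro hcon
    rw [hcon, Complex.norm_real, Real.norm_eq_abs] at h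
    linarith
  have hU0 : ‖UU a 0‖ = 1/2 := by
    rw [UU, ctr_zero, Complex.norm_real, Real.norm_eq_abs]
    norm_num
  have hnot : ¬ inP a 0 z := by
    rw [inP, not_le, tt_zero]
    have := tri2 z 0 (UU a 0)
    simp only [sub_zero, norm_sub_rev] at this
    have h2 : ‖z - UU a 0‖ ≥ ‖z‖ - ‖UU a 0‖ := by
      have := norm_sub_le (z) (UU a 0)
      have h3 := norm_add_le (z - UU a 0) (UU a 0)
      rw [sub_add_cancel] at h3
      linarith
    rw [hU0] at h2
    linarith
  exact FF_eq_far hzx (NN_eq (fun k hk => absurd hk (by omega)) hnot)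

/-- the image always has norm at most `max ‖z‖ 2` -/
lemma FF_bounded (ha : InBlocks a x) (hb : InBlocks b y) (z : ℂ) :
    ‖FF a b x y ω z‖ ≤ max ‖z‖ 2 := by
  have hU0 : ‖UU b 0‖ = 1/2 := by
    rw [UU, ctr_zero, Complex.norm_real, Real.norm_eq_abs]
    norm_num
  by_cases hz : z = (x:ℂ)
  · rw [hz, FF_eq_x]
    have hy1 : |y| ≤ 1 := by
      obtain ⟨h1, h2⟩ := hb 0
      simp only [base_zero, tt_zero] at h1 h2
      rw [abs_le]
      exact ⟨by linarith, by linarith⟩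
    rw [Complex.norm_real, Real.norm_eq_abs]
    exact le_max_of_le_right (by linarith)
  · rcases hNz : NN a z with _ | J
    · rw [FF_eq_far hz hNz]
      exact le_max_left _ _
    · have hNz' : NN a z = J + 1 := hNz
      have hdist : ‖FF a b x y ω z - UU b 0‖ ≤ 3/2 := by
        cases J with
        | zero =>
          rw [FF_dist_V hz hNz']
          have h := inP_of_lt (a := a) (z := z) (k := 0) (by omega)
          rw [inP, tt_zero] at h
          linarith
        | succ J' =>
          have h := FF_near (b := b) (x := x) (y := y) (ω := ω) hz hNz' (k := 0) (by omega)
          have h1 : tt 1 = 1/3 := by rw [tt, pow_one]; norm_num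
          rw [h1] at h
          linarith
      have h3 := norm_add_le (FF a b x y ω z - UU b 0) (UU b 0)
      rw [sub_add_cancel, hU0] at h3
      exact le_max_of_le_right (by linarith)

end Inverse


/-! ### Packaged existence of the good plane map -/

lemma exists_good_map {x y : ℝ} (hx : x ∈ cantorSet) (hy : y ∈ cantorSet) :
    ∃ f g : ℂ → ℂ,
      (∀ z, g (f z) = z) ∧ (∀ z, f (g z) = z) ∧
      (∀ z w, ‖f z - f w‖ ≤ 140 * ‖z - w‖) ∧
      (∀ z w, ‖g z - g w‖ ≤ 140 * ‖z - w‖) ∧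
      (∀ z, 2 < ‖z‖ → f z = z) ∧ (∀ z, ‖f z‖ ≤ max ‖z‖ 2) ∧
      (∀ z, 2 < ‖z‖ → g z = z) ∧ (∀ z, ‖g z‖ ≤ max ‖z‖ 2) ∧
      (f '' ((fun r : ℝ => (r:ℂ)) '' cantorSet) = (fun r : ℝ => (r:ℂ)) '' cantorSet) ∧
      f ((x:ℝ):ℂ) = ((y:ℝ):ℂ) := by
  obtain ⟨a, ha⟩ := exists_digits hx
  obtain ⟨b, hb⟩ := exists_digits hy
  refine ⟨FF a b x y 1, FF b a y x (-1), ?_, ?_, ?_, ?_, ?_, ?_, ?_, ?_, ?_, ?_⟩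
  · intro z
    have h := gcomp (a := a) (b := b) (x := x) (y := y) (ω := 1) (Or.inl rfl) ha hb z
    simpa using h
  · intro z
    have h := gcomp (a := b) (b := a) (x := y) (y := x) (ω := -1) (Or.inr rfl) hb ha z
    rw [neg_neg] at h
    exact h
  · exact FF_lip (Or.inl rfl) ha hb
  · exact FF_lip (Or.inr rfl) hb ha
  · intro z hz
    exact FF_far_id ha hz
  · exact FF_bounded ha hb
  · intro z hz
    exact FF_far_id hb hz
  · exact FF_bounded hb ha
  · ext ζ
    constructor
    · rintro ⟨-, ⟨r, hr, rfl⟩, rfl⟩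
      obtain ⟨r', hr'C, heq⟩ := FF_maps_cantor (ω := 1) (Or.inl rfl) ha hb hy hr
      exact ⟨r', hr'C, heq.symm⟩
    · rintro ⟨r, hr, rfl⟩
      obtain ⟨r'', hr''C, heq⟩ := FF_maps_cantor (a := b) (b := a) (x := y) (y := x)
        (ω := -1) (Or.inr rfl) hb ha hx hr
      refine ⟨((r'':ℝ):ℂ), ⟨r'', hr''C, rfl⟩, ?_⟩
      rw [← heq]
      have h := gcomp (a := b) (b := a) (x := y) (y := x) (ω := -1) (Or.inr rfl) hb ha ((r:ℝ):ℂ)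
      rw [neg_neg] at h
      exact h
  · exact FF_eq_x

/-! ### Chordal estimates -/

lemma chordal_nonneg (p q : OnePoint ℂ) : 0 ≤ chordal p q := by
  rcases p with _ | z <;> rcases q with _ | w <;> rw [chordal] <;> positivity

lemma sqrt_le_scale {u v C : ℝ} (h : u ≤ C^2 * v) (hC : 0 ≤ C) :
    Real.sqrt u ≤ C * Real.sqrt v := by
  have h1 : Real.sqrt u ≤ Real.sqrt (C^2 * v) := Real.sqrt_le_sqrt h
  rwa [Real.sqrt_mul (by positivity) v, Real.sqrt_sq hC] at h1

lemma sqrt_weight_le {u v : ℝ} (h : u ≤ 5 * v) (hu : 0 ≤ u) (hv : 0 ≤ v) :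
    Real.sqrt u ≤ 5 * Real.sqrt v :=
  sqrt_le_scale (by nlinarith) (by norm_num)

/-- weight comparison from the support properties -/
lemma weight5 (f : ℂ → ℂ) (hfar : ∀ z, 2 < ‖z‖ → f z = z) (z : ℂ) :
    1 + ‖z‖^2 ≤ 5 * (1 + ‖f z‖^2) := by
  rcases le_or_gt ‖z‖ 2 with h | h
  · nlinarith [sq_nonneg (‖f z‖), norm_nonneg (f z), norm_nonneg z]
  · rw [hfar z h]
    nlinarith [sq_nonneg (‖z‖)]

/-- the induced map on the one-point compactification -/
def sphereMap (f : ℂ → ℂ) : OnePoint ℂ → OnePoint ℂ := fun p => Option.map f p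

@[simp] lemma sphereMap_coe (f : ℂ → ℂ) (z : ℂ) :
    sphereMap f ((z : ℂ) : OnePoint ℂ) = ((f z : ℂ) : OnePoint ℂ) := rfl

@[simp] lemma sphereMap_infty (f : ℂ → ℂ) :
    sphereMap f (OnePoint.infty) = OnePoint.infty := rfl

/-- the chordal distance expands by at most `700` under `sphereMap f` -/
lemma chordal_comp (f : ℂ → ℂ) (h5 : ∀ z, 1 + ‖z‖^2 ≤ 5 * (1 + ‖f z‖^2))
    (hlip : ∀ z w, ‖f z - f w‖ ≤ 140 * ‖z - w‖) (p q : OnePoint ℂ) :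
    chordal (sphereMap f p) (sphereMap f q) ≤ 700 * chordal p q := by
  have w1 : ∀ z : ℂ, (0:ℝ) < 1 + ‖z‖^2 := fun z => by positivity
  rcases p with _ | z <;> rcases q with _ | w
  · rw [show chordal ((Option.none : OnePoint ℂ)) (Option.none : OnePoint ℂ) = 0 from rfl,
      show sphereMap f (Option.none : OnePoint ℂ) = (Option.none : OnePoint ℂ) from rfl]
    rw [show chordal ((Option.none : OnePoint ℂ)) (Option.none : OnePoint ℂ) = 0 from rfl]
    norm_num
  · -- ∞ , finite
    rw [show sphereMap f (Option.none : OnePoint ℂ) = (Option.none : OnePoint ℂ) from rfl,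
      show sphereMap f (Option.some w) = Option.some (f w) from rfl]
    rw [show chordal (Option.none : OnePoint ℂ) (Option.some (f w)) = 2 / Real.sqrt (1 + ‖f w‖^2) from rfl,
      show chordal (Option.none : OnePoint ℂ) (Option.some w) = 2 / Real.sqrt (1 + ‖w‖^2) from rfl]
    have hs1 : (0:ℝ) < Real.sqrt (1 + ‖f w‖^2) := Real.sqrt_pos.mpr (w1 _)
    have hs2 : (0:ℝ) < Real.sqrt (1 + ‖w‖^2) := Real.sqrt_pos.mpr (w1 _)
    have hsl : Real.sqrt (1 + ‖w‖^2) ≤ 5 * Real.sqrt (1 + ‖f w‖^2) :=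
      sqrt_weight_le (h5 w) (w1 w).le (w1 (f w)).le
    rw [div_le_iff₀ hs1, show 700 * (2 / Real.sqrt (1 + ‖w‖^2)) = 1400 / Real.sqrt (1 + ‖w‖^2) by ring,
      div_mul_eq_mul_div, le_div_iff₀ hs2]
    nlinarith
  · -- finite , ∞
    rw [show sphereMap f (Option.none : OnePoint ℂ) = (Option.none : OnePoint ℂ) from rfl,
      show sphereMap f (Option.some z) = Option.some (f z) from rfl]
    rw [show chordal (Option.some (f z)) (Option.none : OnePoint ℂ) = 2 / Real.sqrt (1 + ‖f z‖^2) from rfl,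
      show chordal (Option.some z) (Option.none : OnePoint ℂ) = 2 / Real.sqrt (1 + ‖z‖^2) from rfl]
    have hs1 : (0:ℝ) < Real.sqrt (1 + ‖f z‖^2) := Real.sqrt_pos.mpr (w1 _)
    have hs2 : (0:ℝ) < Real.sqrt (1 + ‖z‖^2) := Real.sqrt_pos.mpr (w1 _)
    have hsl : Real.sqrt (1 + ‖z‖^2) ≤ 5 * Real.sqrt (1 + ‖f z‖^2) :=
      sqrt_weight_le (h5 z) (w1 z).le (w1 (f z)).le
    rw [div_le_iff₀ hs1, show 700 * (2 / Real.sqrt (1 + ‖z‖^2)) = 1400 / Real.sqrt (1 + ‖z‖^2) by ring,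
      div_mul_eq_mul_div, le_div_iff₀ hs2]
    nlinarith
  · -- finite , finite
    rw [show sphereMap f (Option.some z) = Option.some (f z) from rfl,
      show sphereMap f (Option.some w) = Option.some (f w) from rfl]
    rw [show chordal (Option.some (f z)) (Option.some (f w))
        = 2 * ‖f z - f w‖ / Real.sqrt ((1 + ‖f z‖^2) * (1 + ‖f w‖^2)) from rfl,
      show chordal (Option.some z) (Option.some w)
        = 2 * ‖z - w‖ / Real.sqrt ((1 + ‖z‖^2) * (1 + ‖w‖^2)) from rfl]
    have hB : (0:ℝ) < Real.sqrt ((1 + ‖f z‖^2) * (1 + ‖f w‖^2)) :=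
      Real.sqrt_pos.mpr (by positivity)
    have hB' : (0:ℝ) < Real.sqrt ((1 + ‖z‖^2) * (1 + ‖w‖^2)) :=
      Real.sqrt_pos.mpr (by positivity)
    have hprod : (1 + ‖z‖^2) * (1 + ‖w‖^2) ≤ 25 * ((1 + ‖f z‖^2) * (1 + ‖f w‖^2)) := by
      have h1 := h5 z
      have h2 := h5 w
      nlinarith [w1 z, w1 w, w1 (f z), w1 (f w)]
    have hBB : Real.sqrt ((1 + ‖z‖^2) * (1 + ‖w‖^2))
        ≤ 5 * Real.sqrt ((1 + ‖f z‖^2) * (1 + ‖f w‖^2)) := by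
      apply sqrt_le_scale ?_ (by norm_num)
      nlinarith [w1 (f z), w1 (f w)]
    rw [show (700:ℝ) * (2 * ‖z - w‖ / Real.sqrt ((1 + ‖z‖ ^ 2) * (1 + ‖w‖ ^ 2)))
        = 1400 * ‖z - w‖ / Real.sqrt ((1 + ‖z‖ ^ 2) * (1 + ‖w‖ ^ 2)) by ring]
    rw [div_le_div_iff₀ hB hB']
    have hA := hlip z w
    have h1 : ‖f z - f w‖ * Real.sqrt ((1 + ‖z‖^2) * (1 + ‖w‖^2))
        ≤ (140 * ‖z - w‖) * (5 * Real.sqrt ((1 + ‖f z‖^2) * (1 + ‖f w‖^2))) :=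
      mul_le_mul hA hBB hB'.le (by positivity)
    nlinarith [norm_nonneg (z - w), hB.le]

/-! ### the induced sphere homeomorphism -/

lemma lip_continuous (f : ℂ → ℂ) (hlip : ∀ z w, ‖f z - f w‖ ≤ 140 * ‖z - w‖) :
    Continuous f := by
  have : LipschitzWith 140 f := by
    apply LipschitzWith.of_dist_le_mul
    intro z w
    rw [dist_eq_norm, dist_eq_norm]
    simpa using hlip z w
  exact this.continuous

lemma map_continuous_sphere (f : ℂ → ℂ) (hlip : ∀ z w, ‖f z - f w‖ ≤ 140 * ‖z - w‖)
    (hfar : ∀ z, 2 < ‖z‖ → f z = z) :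
    Continuous (sphereMap f) := by
  rw [continuous_iff_continuousAt]
  intro p
  rcases p with _ | z
  · -- at ∞
    have hopen : IsOpen ((OnePoint.some '' (Metric.closedBall (0:ℂ) 2))ᶜ) :=
      OnePoint.isOpen_compl_image_coe.mpr ⟨Metric.isClosed_closedBall, isCompact_closedBall 0 2⟩
    have hmem : (OnePoint.infty : OnePoint ℂ) ∈ (OnePoint.some '' (Metric.closedBall (0:ℂ) 2))ᶜ := by
      rintro ⟨w, -, hw⟩
      exact OnePoint.coe_ne_infty w hw
    have heq : (sphereMap f) =ᶠ[nhds (OnePoint.infty : OnePoint ℂ)] id := by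
      filter_upwards [hopen.mem_nhds hmem] with q hq
      rcases q with _ | w
      · rfl
      · have hw : 2 < ‖w‖ := by
          by_contra hcon
          push_neg at hcon
          exact hq ⟨w, by simpa [Metric.mem_closedBall, dist_eq_norm] using hcon, rfl⟩
        exact congrArg Option.some (hfar w hw)
    exact (continuousAt_congr heq).mpr continuousAt_id
  · rw [show ((Option.some z : OnePoint ℂ)) = ((z : ℂ) : OnePoint ℂ) from rfl,
      OnePoint.continuousAt_coe]
    have hco : (sphereMap f) ∘ (OnePoint.some) = OnePoint.some ∘ f := rfl
    rw [hco]
    exact (OnePoint.continuous_coe.comp (lip_continuous f hlip)).continuousAt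

/-- the sphere homeomorphism induced by a pair of mutually inverse nice maps -/
noncomputable def mkHomeo (f g : ℂ → ℂ)
    (hgf : ∀ z, g (f z) = z) (hfg : ∀ z, f (g z) = z)
    (hflip : ∀ z w, ‖f z - f w‖ ≤ 140 * ‖z - w‖)
    (hglip : ∀ z w, ‖g z - g w‖ ≤ 140 * ‖z - w‖)
    (hffar : ∀ z, 2 < ‖z‖ → f z = z) (hgfar : ∀ z, 2 < ‖z‖ → g z = z) :
    OnePoint ℂ ≃ₜ OnePoint ℂ where
  toFun := sphereMap f
  invFun := sphereMap g
  left_inv := by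
    rintro (_ | z)
    · rfl
    · exact congrArg Option.some (hgf z)
  right_inv := by
    rintro (_ | z)
    · rfl
    · exact congrArg Option.some (hfg z)
  continuous_toFun := map_continuous_sphere f hflip hffar
  continuous_invFun := map_continuous_sphere g hglip hgfar

/-! ### the linear dilatation bound -/

lemma linDil_le_of_bilip (Φ : OnePoint ℂ → OnePoint ℂ) (M : ℝ) (hM : 1 ≤ M)
    (h1 : ∀ p q, chordal (Φ p) (Φ q) ≤ M * chordal p q)
    (h2 : ∀ p q, chordal p q ≤ M * chordal (Φ p) (Φ q)) (p : OnePoint ℂ) :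
    linDil chordal chordal Φ p ≤ M^2 := by
  have hM0 : (0:ℝ) < M := by linarith
  rw [linDil]
  apply Filter.limsup_le_of_le
  · apply Filter.IsCoboundedUnder.of_frequently_ge (a := 0)
    apply Filter.Eventually.frequently
    filter_upwards with r
    apply div_nonneg
    · apply Real.sSup_nonneg
      rintro - ⟨q, -, rfl⟩
      exact chordal_nonneg _ _
    · apply Real.sInf_nonneg
      rintro - ⟨q, -, rfl⟩
      exact chordal_nonneg _ _
  · filter_upwards [self_mem_nhdsWithin] with r hr
    have hrpos : (0:ℝ) < r := hr
    set S := (fun q => chordal (Φ p) (Φ q)) '' {q | chordal p q = r} with hS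
    rcases Set.eq_empty_or_nonempty S with hSe | hSne
    · rw [hSe, Real.sSup_empty, Real.sInf_empty]
      norm_num
      nlinarith
    · have hub : ∀ e ∈ S, e ≤ M * r := by
        rintro - ⟨q, hq, rfl⟩
        have := h1 p q
        rw [Set.mem_setOf_eq.mp hq] at this
        exact this
      have hlb : ∀ e ∈ S, r / M ≤ e := by
        rintro - ⟨q, hq, rfl⟩
        have h := h2 p q
        rw [Set.mem_setOf_eq.mp hq] at h
        rw [div_le_iff₀ hM0]
        linarith
      have hsup : sSup S ≤ M * r := Real.sSup_le hub (by positivity)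
      have hinf : r / M ≤ sInf S := le_csInf hSne hlb
      have hdiv : sSup S / sInf S ≤ (M * r) / (r / M) :=
        div_le_div₀ (by positivity) hsup (by positivity) hinf
      have heq : (M * r) / (r / M) = M^2 := by
        field_simp
      rwa [heq] at hdiv

end CantorQC


/-- MacManus–Näkki–Palka: the middle-thirds Cantor set (Mathlib's ternary `cantorSet`),
viewed inside the Riemann sphere, is ambiently quasiconformally homogeneous. -/
theorem cantor_set_is_ambiently_qch :
    AmbQCH ((fun x : ℝ => ((x : ℂ) : OnePoint ℂ)) '' cantorSet) := by
  classical
  refine ⟨700^2, ?_⟩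
  intro p hp q hq
  obtain ⟨x, hx, rfl⟩ := hp
  obtain ⟨y, hy, rfl⟩ := hq
  obtain ⟨f, g, hgf, hfg, hflip, hglip, hffar, hfbd, hgfar, hgbd, himg, hfx⟩ :=
    CantorQC.exists_good_map hx hy
  let Φ : OnePoint ℂ ≃ₜ OnePoint ℂ := CantorQC.mkHomeo f g hgf hfg hflip hglip hffar hgfar
  have hΦ : ⇑Φ = CantorQC.sphereMap f := rfl
  have hΦup : ∀ p q, chordal (Φ p) (Φ q) ≤ 700 * chordal p q := by
    intro p q
    rw [hΦ]
    exact CantorQC.chordal_comp f (CantorQC.weight5 f hffar) hflip p q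
  have hginv : ∀ p, CantorQC.sphereMap g (Φ p) = p := by
    rintro (_ | z)
    · rfl
    · exact congrArg Option.some (hgf z)
  have hΦdown : ∀ p q, chordal p q ≤ 700 * chordal (Φ p) (Φ q) := by
    intro p q
    have h := CantorQC.chordal_comp g (CantorQC.weight5 g hgfar) hglip (Φ p) (Φ q)
    rwa [hginv p, hginv q] at h
  refine ⟨Φ, ⟨by norm_num, fun p => ?_⟩, ?_, ?_⟩
  · have h := CantorQC.linDil_le_of_bilip (⇑Φ) 700 (by norm_num) hΦup hΦdown p
    exact h
  · ext pt
    constructor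
    · rintro ⟨-, ⟨x', hx', rfl⟩, rfl⟩
      have hmem : f ((x':ℝ):ℂ) ∈ (fun r : ℝ => (r:ℂ)) '' cantorSet := by
        rw [← himg]
        exact ⟨_, ⟨x', hx', rfl⟩, rfl⟩
      obtain ⟨r', hr', heq⟩ := hmem
      have hcoe : Φ (((x':ℝ):ℂ) : OnePoint ℂ) = ((f ((x':ℝ):ℂ) : ℂ) : OnePoint ℂ) := rfl
      rw [hcoe, ← heq]
      exact ⟨r', hr', rfl⟩
    · rintro ⟨r, hr, rfl⟩
      have hmem : ((r:ℝ):ℂ) ∈ f '' ((fun r : ℝ => (r:ℂ)) '' cantorSet) := by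
        rw [himg]
        exact ⟨r, hr, rfl⟩
      obtain ⟨ζ, ⟨x'', hx'', rfl⟩, hfz⟩ := hmem
      refine ⟨(((x'':ℝ):ℂ) : OnePoint ℂ), ⟨x'', hx'', rfl⟩, ?_⟩
      have hcoe : Φ (((x'':ℝ):ℂ) : OnePoint ℂ) = ((f ((x'':ℝ):ℂ) : ℂ) : OnePoint ℂ) := rfl
      rw [hcoe, hfz]
  · exact congrArg Option.some hfx
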